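/- arXiv:1305.7012 — 2 statements merged into one kernel-verified Lean document; each statement's English description precedes it below -/
import Mathlib

section
/- Let ξ : ℝ^d → ℝ be a smooth even kernel with compact support and let F̄ : 𝕋^d × ℝ → ℝ be smooth with c ≤ ∂F̄/∂z ≤ 1/c for some c > 0. Define F(x,m) = ((F̄(·, (m⋆ξ)(·))) ⋆ ξ)(x) for probability measures m on 𝕋^d. Then for all probability measures m₁, m₂ on 𝕋^d: ∫_{𝕋^d} (F(x,m₁) − F(x,m₂)) d(m₁ − m₂)(x) ≥ c ∫_{𝕋^d} ((m₁⋆ξ)(x) − (m₂⋆ξ)(x))² dx. -/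
open MeasureTheory

noncomputable section

/-- The flat torus `𝕋^d = ℝ^d/ℤ^d`. -/
abbrev Torus (d : ℕ) := Fin d → AddCircle (1 : ℝ)

/-- Convolution `m ⋆ ξ` of a measure `m` on the torus with a kernel `ξ`. -/
def measConv {d : ℕ} (m : Measure (Torus d)) (ξ : Torus d → ℝ) (x : Torus d) : ℝ :=
  ∫ y, ξ (x - y) ∂m

/-- The coupling `F(x, m) = (F̄(·, (m⋆ξ)(·)) ⋆ ξ)(x)`. -/
def coupling {d : ℕ} (ξ : Torus d → ℝ) (Fb : Torus d → ℝ → ℝ)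
    (m : Measure (Torus d)) (x : Torus d) : ℝ :=
  ∫ y, Fb y (measConv m ξ y) * ξ (x - y)


lemma integrable_of_cont {α : Type*} [TopologicalSpace α] [CompactSpace α] [T2Space α]
    [MeasurableSpace α] [OpensMeasurableSpace α] {f : α → ℝ} (hf : Continuous f)
    (μ : Measure α) [IsFiniteMeasure μ] : Integrable f μ :=
  hf.integrable_of_hasCompactSupport (HasCompactSupport.of_compactSpace f)

lemma continuous_measConv {d : ℕ} (m : Measure (Torus d)) [IsFiniteMeasure m]
    {ξ : Torus d → ℝ} (hξ : Continuous ξ) : Continuous (measConv m ξ) := by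
  obtain ⟨C, hC⟩ := isCompact_univ.exists_bound_of_continuousOn hξ.continuousOn
  exact continuous_of_dominated
    (fun x => (hξ.comp (continuous_const.sub continuous_id)).aestronglyMeasurable)
    (fun x => ae_of_all _ fun y => hC _ trivial)
    (integrable_const C)
    (ae_of_all _ fun y => hξ.comp (continuous_id.sub continuous_const))

lemma key_mvt_half (c : ℝ) (f f' : ℝ → ℝ) (hd : ∀ z, HasDerivAt f (f' z) z)
    (hl : ∀ z, c ≤ f' z) (a b : ℝ) (hab : b ≤ a) : c * (a - b) ≤ f a - f b := by
  have hg : ∀ z, HasDerivAt (fun w => f w - c * w) (f' z - c) z := by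
    intro z
    have h := (hd z).sub ((hasDerivAt_id' z).const_mul c); rw [mul_one] at h; exact h
  have hmono : Monotone (fun w => f w - c * w) := by
    apply monotone_of_deriv_nonneg (fun z => (hg z).differentiableAt)
    intro z
    rw [(hg z).deriv]
    linarith [hl z]
  have := hmono hab
  simp only at this
  linarith

lemma key_mvt (c : ℝ) (f f' : ℝ → ℝ) (hd : ∀ z, HasDerivAt f (f' z) z)
    (hl : ∀ z, c ≤ f' z) (a b : ℝ) : c * (a - b) ^ 2 ≤ (f a - f b) * (a - b) := by
  rcases le_total b a with h | h
  · have h1 := key_mvt_half c f f' hd hl a b h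
    have h2 : 0 ≤ a - b := by linarith
    nlinarith
  · have h1 := key_mvt_half c f f' hd hl b a h
    have h2 : 0 ≤ b - a := by linarith
    nlinarith

/-- lower bound
`∫ (F(x,m₁) − F(x,m₂)) d(m₁−m₂) ≥ c ∫ ((m₁⋆ξ)(x) − (m₂⋆ξ)(x))² dx`. -/
theorem statement0 {d : ℕ} (c : ℝ) (hc : 0 < c)
    (ξ : Torus d → ℝ) (hξcont : Continuous ξ) (hξeven : ∀ x, ξ (-x) = ξ x)
    (Fb : Torus d → ℝ → ℝ) (Fb' : Torus d → ℝ → ℝ)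
    (hFbcont : Continuous fun p : Torus d × ℝ => Fb p.1 p.2)
    (hFbderiv : ∀ x z, HasDerivAt (fun w => Fb x w) (Fb' x z) z)
    (hlow : ∀ x z, c ≤ Fb' x z) (hup : ∀ x z, Fb' x z ≤ 1 / c)
    (m₁ m₂ : Measure (Torus d))
    [IsProbabilityMeasure m₁] [IsProbabilityMeasure m₂] :
    (∫ x, (coupling ξ Fb m₁ x - coupling ξ Fb m₂ x) ∂m₁)
        - ∫ x, (coupling ξ Fb m₁ x - coupling ξ Fb m₂ x) ∂m₂
      ≥ c * ∫ x, (measConv m₁ ξ x - measConv m₂ ξ x) ^ 2 := by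
  have hcu₁ : Continuous (measConv m₁ ξ) := continuous_measConv m₁ hξcont
  have hcu₂ : Continuous (measConv m₂ ξ) := continuous_measConv m₂ hξcont
  set u₁ := measConv m₁ ξ
  set u₂ := measConv m₂ ξ
  set g : Torus d → ℝ := fun y => Fb y (u₁ y) - Fb y (u₂ y) with hgdef
  have hgc : Continuous g :=
    (hFbcont.comp (continuous_id.prodMk hcu₁)).sub
      (hFbcont.comp (continuous_id.prodMk hcu₂))
  have step : ∀ (m : Measure (Torus d)), IsProbabilityMeasure m →
      (∫ x, (coupling ξ Fb m₁ x - coupling ξ Fb m₂ x) ∂m) = ∫ y, g y * measConv m ξ y := by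
    intro m hm
    have h1 : ∀ x, coupling ξ Fb m₁ x - coupling ξ Fb m₂ x = ∫ y, g y * ξ (x - y) := by
      intro x
      unfold coupling
      rw [← integral_sub]
      · congr 1; ext y; simp [hgdef]; ring
      · exact integrable_of_cont
          (((hFbcont.comp (continuous_id.prodMk hcu₁))).mul
            (hξcont.comp (continuous_const.sub continuous_id))) volume
      · exact integrable_of_cont
          (((hFbcont.comp (continuous_id.prodMk hcu₂))).mul
            (hξcont.comp (continuous_const.sub continuous_id))) volume
    have hprod : Integrable (Function.uncurry fun x y => g y * ξ (x - y)) (m.prod volume) := by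
      apply integrable_of_cont
      exact (hgc.comp continuous_snd).mul (hξcont.comp (continuous_fst.sub continuous_snd))
    calc (∫ x, (coupling ξ Fb m₁ x - coupling ξ Fb m₂ x) ∂m)
        = ∫ x, (∫ y, g y * ξ (x - y)) ∂m := by simp_rw [h1]
      _ = ∫ y, ∫ x, g y * ξ (x - y) ∂m := integral_integral_swap hprod
      _ = ∫ y, g y * measConv m ξ y := by
          congr 1; ext y
          rw [integral_const_mul]
          congr 1
          unfold measConv
          congr 1; ext x
          rw [← hξeven (y - x), neg_sub]
  rw [step m₁ inferInstance, step m₂ inferInstance, ← integral_sub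
    (integrable_of_cont (f := fun y => g y * measConv m₁ ξ y) (hgc.mul hcu₁) volume) (integrable_of_cont (f := fun y => g y * measConv m₂ ξ y) (hgc.mul hcu₂) volume)]
  rw [ge_iff_le, ← integral_const_mul]
  apply integral_mono
  · exact integrable_of_cont (continuous_const.mul (((hcu₁.sub hcu₂).pow 2))) volume
  · exact integrable_of_cont ((hgc.mul hcu₁).sub (hgc.mul hcu₂)) volume
  · intro y
    have := key_mvt c (fun w => Fb y w) (fun z => Fb' y z) (hFbderiv y) (hlow y) (u₁ y) (u₂ y)
    simp only [hgdef]
    nlinarith [this]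
end
end

section
/- Let ξ : ℝ^d → ℝ be a smooth even compactly supported kernel and F̄ : 𝕋^d × ℝ → ℝ smooth with c ≤ ∂F̄/∂z ≤ 1/c for some c > 0. Define F(x,m) = ((F̄(·,(m⋆ξ)(·)))⋆ξ)(x). Then F satisfies the weak coercivity condition: there exists c̄ > 0 (one may take c̄ = c³‖ξ‖_{L²}^{−2}) such that for all probability measures m₁, m₂ on 𝕋^d, ∫ (F(x,m₁) − F(x,m₂)) d(m₁−m₂) ≥ c̄ ∫ (F(x,m₁) − F(x,m₂))² dx. -/
open MeasureTheory

noncomputable section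

/- ### Auxiliary lemmas -/

instance torusNegInvariant (d : ℕ) : (volume : Measure (Torus d)).IsNegInvariant :=
  ⟨(volume_preserving_pi (fun _ : Fin d => Measure.measurePreserving_neg volume)).map_eq⟩

instance torusProb (d : ℕ) : IsProbabilityMeasure (volume : Measure (Torus d)) := by
  constructor
  rw [show (volume : Measure (Torus d)) = Measure.pi (fun _ => volume) from rfl, Measure.pi_univ]
  simp [AddCircle.measure_univ]

/-- A continuous function on a compact space is integrable for any finite measure. -/
lemma cont_integrable {X : Type*} [TopologicalSpace X] [CompactSpace X] [T2Space X]
    [MeasurableSpace X] [OpensMeasurableSpace X] [SecondCountableTopology X]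
    {f : X → ℝ} (hf : Continuous f) (μ : Measure X) [IsFiniteMeasure μ] : Integrable f μ :=
  hf.integrable_of_hasCompactSupport (HasCompactSupport.of_compactSpace f)

/-- Continuity of a parametrized integral against a finite measure on the torus. -/
lemma conv_cont {d : ℕ} (μ : Measure (Torus d)) [IsFiniteMeasure μ]
    (F : Torus d → Torus d → ℝ) (hF : Continuous fun p : Torus d × Torus d => F p.1 p.2) :
    Continuous fun x => ∫ y, F x y ∂μ := by
  obtain ⟨C, hC⟩ := (isCompact_range hF.norm).bddAbove
  have hCb : ∀ x y, ‖F x y‖ ≤ C := fun x y => hC ⟨(x, y), rfl⟩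
  rw [continuous_iff_continuousAt]
  intro x₀
  apply continuousAt_of_dominated (bound := fun _ => C)
  · exact Filter.Eventually.of_forall fun x =>
      (hF.comp (Continuous.prodMk_right x)).aestronglyMeasurable
  · exact Filter.Eventually.of_forall fun x =>
      Filter.Eventually.of_forall fun y => hCb x y
  · exact integrable_const C
  · exact Filter.Eventually.of_forall fun y =>
      (hF.comp (continuous_id.prodMk continuous_const)).continuousAt

/-- Cauchy–Schwarz inequality for integrals. -/
lemma integral_cauchy_schwarz {α : Type*} [MeasurableSpace α] (μ : Measure α)
    (f g : α → ℝ) (hf : Integrable (fun x => f x ^ 2) μ) (hg : Integrable (fun x => g x ^ 2) μ)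
    (hfg : Integrable (fun x => f x * g x) μ) :
    (∫ x, f x * g x ∂μ) ^ 2 ≤ (∫ x, f x ^ 2 ∂μ) * ∫ x, g x ^ 2 ∂μ := by
  have key : ∀ t : ℝ, 0 ≤ (∫ x, f x ^ 2 ∂μ) * (t * t) + (2 * ∫ x, f x * g x ∂μ) * t
      + ∫ x, g x ^ 2 ∂μ := by
    intro t
    have h0 : 0 ≤ ∫ x, (t * f x + g x) ^ 2 ∂μ := integral_nonneg fun x => sq_nonneg _
    have hexp : (fun x => (t * f x + g x) ^ 2)
        = fun x => t ^ 2 * f x ^ 2 + (2 * t) * (f x * g x) + g x ^ 2 := by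
      funext x; ring
    have e1 : ∫ x, (t * f x + g x) ^ 2 ∂μ
        = (∫ x, f x ^ 2 ∂μ) * (t * t) + (2 * ∫ x, f x * g x ∂μ) * t + ∫ x, g x ^ 2 ∂μ := by
      have hi1 : Integrable (fun x => t ^ 2 * f x ^ 2 + 2 * t * (f x * g x)) μ := by
        exact (hf.const_mul _).add (hfg.const_mul _)
      rw [hexp, integral_add hi1 hg,
        integral_add (hf.const_mul (t ^ 2)) (hfg.const_mul (2 * t)),
        integral_const_mul, integral_const_mul]
      ring
    linarith [e1 ▸ h0]
  have hd := discrim_le_zero key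
  rw [discrim] at hd
  nlinarith [hd]

/-- Monotonicity consequences of two-sided derivative bounds. -/
lemma mono_aux {c : ℝ} (hc : 0 < c) (f f' : ℝ → ℝ)
    (hd : ∀ z, HasDerivAt f (f' z) z) (hl : ∀ z, c ≤ f' z) (hu : ∀ z, f' z ≤ 1 / c)
    {a b : ℝ} (hab : b ≤ a) :
    c * (a - b) ≤ f a - f b ∧ f a - f b ≤ (1 / c) * (a - b) := by
  constructor
  · have hmono : Monotone (fun z => f z - c * z) := by
      apply monotone_of_deriv_nonneg
      · exact fun z => ((hd z).sub (by simpa using (hasDerivAt_id z).const_mul c)).differentiableAt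
      · intro z
        rw [HasDerivAt.deriv (f := fun z => f z - c * z) ((hd z).sub (by simpa using (hasDerivAt_id z).const_mul c :
          HasDerivAt (fun z => c * z) c z))]
        linarith [hl z]
    have := hmono hab
    simp only at this
    linarith
  · have hmono : Monotone (fun z => (1 / c) * z - f z) := by
      apply monotone_of_deriv_nonneg
      · exact fun z => ((by simpa using (hasDerivAt_id z).const_mul (1/c) :
          HasDerivAt (fun z => (1/c) * z) (1/c) z).sub (hd z)).differentiableAt
      · intro z
        rw [HasDerivAt.deriv (f := fun z => 1 / c * z - f z) ((by simpa using (hasDerivAt_id z).const_mul (1/c) :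
          HasDerivAt (fun z => (1/c) * z) (1/c) z).sub (hd z))]
        linarith [hu z]
    have := hmono hab
    simp only at this
    linarith

lemma key_ineqs {c : ℝ} (hc : 0 < c) (f f' : ℝ → ℝ)
    (hd : ∀ z, HasDerivAt f (f' z) z) (hl : ∀ z, c ≤ f' z) (hu : ∀ z, f' z ≤ 1 / c)
    (a b : ℝ) :
    c * (a - b) ^ 2 ≤ (f a - f b) * (a - b) ∧ (f a - f b) ^ 2 ≤ (1 / c) ^ 2 * (a - b) ^ 2 := by
  rcases le_total b a with h | h
  · obtain ⟨h1, h2⟩ := mono_aux hc f f' hd hl hu h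
    have hab : (0:ℝ) ≤ a - b := by linarith
    have h0 : 0 ≤ f a - f b := le_trans (by positivity) h1
    constructor <;> nlinarith
  · obtain ⟨h1, h2⟩ := mono_aux hc f f' hd hl hu h
    have hab : (0:ℝ) ≤ b - a := by linarith
    have h0 : 0 ≤ f b - f a := le_trans (by positivity) h1
    constructor <;> nlinarith

set_option maxHeartbeats 1000000 in
/-- the coupling `F` satisfies the weak coercivity condition, with
`c̄ = c³ ‖ξ‖_{L²}^{-2}`. -/
theorem statement2 {d : ℕ} (c : ℝ) (hc : 0 < c)
    (ξ : Torus d → ℝ) (hξcont : Continuous ξ) (hξeven : ∀ x, ξ (-x) = ξ x)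
    (Fb : Torus d → ℝ → ℝ) (Fb' : Torus d → ℝ → ℝ)
    (hFbcont : Continuous fun p : Torus d × ℝ => Fb p.1 p.2)
    (hFbderiv : ∀ x z, HasDerivAt (fun w => Fb x w) (Fb' x z) z)
    (hlow : ∀ x z, c ≤ Fb' x z) (hup : ∀ x z, Fb' x z ≤ 1 / c) :
    ∃ cbar : ℝ, 0 < cbar ∧
      ∀ m₁ m₂ : Measure (Torus d),
        IsProbabilityMeasure m₁ → IsProbabilityMeasure m₂ →
        (∫ x, (coupling ξ Fb m₁ x - coupling ξ Fb m₂ x) ∂m₁)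
            - ∫ x, (coupling ξ Fb m₁ x - coupling ξ Fb m₂ x) ∂m₂
          ≥ cbar * ∫ x, (coupling ξ Fb m₁ x - coupling ξ Fb m₂ x) ^ 2 := by
  set K : ℝ := ∫ x, ξ x ^ 2 with hKdef
  have hK0 : 0 ≤ K := integral_nonneg fun x => sq_nonneg _
  set M : ℝ := max K 1 with hMdef
  have hM : 0 < M := lt_of_lt_of_le one_pos (le_max_right _ _)
  have hKM : K ≤ M := le_max_left _ _
  refine ⟨c ^ 3 / M, by positivity, ?_⟩
  intro m₁ m₂ hm₁ hm₂
  -- convolutions and their continuity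
  have hconvξ : ∀ (m : Measure (Torus d)), IsProbabilityMeasure m → Continuous (measConv m ξ) := by
    intro m hm
    exact conv_cont m (fun x y => ξ (x - y)) (hξcont.comp (continuous_fst.sub continuous_snd))
  have hconv₁ := hconvξ m₁ hm₁
  have hconv₂ := hconvξ m₂ hm₂
  set φ : Torus d → ℝ := fun y => Fb y (measConv m₁ ξ y) - Fb y (measConv m₂ ξ y) with hφdef
  set u : Torus d → ℝ := fun y => measConv m₁ ξ y - measConv m₂ ξ y with hudef
  have hFbc : ∀ g : Torus d → ℝ, Continuous g → Continuous fun y => Fb y (g y) := by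
    intro g hg
    exact hFbcont.comp (continuous_id.prodMk hg)
  have hφcont : Continuous φ := (hFbc _ hconv₁).sub (hFbc _ hconv₂)
  have hucont : Continuous u := hconv₁.sub hconv₂
  set G : Torus d → ℝ := fun x => ∫ y, φ y * ξ (x - y) with hGdef
  have hGcont : Continuous G :=
    conv_cont volume (fun x y => φ y * ξ (x - y))
      ((hφcont.comp continuous_snd).mul (hξcont.comp (continuous_fst.sub continuous_snd)))
  -- the coupling difference equals G
  have hcoup : ∀ x, coupling ξ Fb m₁ x - coupling ξ Fb m₂ x = G x := by
    intro x
    unfold coupling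
    rw [← integral_sub]
    · apply integral_congr_ae
      filter_upwards with y
      simp only [hφdef]
      ring
    · exact cont_integrable ((hFbc _ hconv₁).mul
        (hξcont.comp (continuous_const.sub continuous_id))) volume
    · exact cont_integrable ((hFbc _ hconv₂).mul
        (hξcont.comp (continuous_const.sub continuous_id))) volume
  -- ∫ G ∂m = ∫ φ ⋅ (m ⋆ ξ)
  have hGm : ∀ (m : Measure (Torus d)), IsProbabilityMeasure m →
      ∫ x, G x ∂m = ∫ y, φ y * measConv m ξ y := by
    intro m hm
    have hint : Integrable (Function.uncurry fun x y => φ y * ξ (x - y)) (m.prod volume) := by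
      apply cont_integrable
      exact (hφcont.comp continuous_snd).mul (hξcont.comp (continuous_fst.sub continuous_snd))
    calc ∫ x, G x ∂m = ∫ x, ∫ y, φ y * ξ (x - y) ∂volume ∂m := rfl
      _ = ∫ y, ∫ x, φ y * ξ (x - y) ∂m ∂volume := integral_integral_swap hint
      _ = ∫ y, φ y * measConv m ξ y := by
          apply integral_congr_ae
          filter_upwards with y
          rw [integral_const_mul]
          congr 1
          unfold measConv
          apply integral_congr_ae
          filter_upwards with x
          rw [← hξeven (y - x), neg_sub]
  -- pointwise bounds
  have hpt : ∀ y, c * u y ^ 2 ≤ φ y * u y ∧ φ y ^ 2 ≤ (1 / c) ^ 2 * u y ^ 2 := by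
    intro y
    exact key_ineqs hc (fun w => Fb y w) (fun w => Fb' y w) (hFbderiv y) (hlow y) (hup y)
      (measConv m₁ ξ y) (measConv m₂ ξ y)
  -- integrals of continuous functions
  have hφu_int : Integrable (fun y => φ y * u y) volume :=
    cont_integrable (hφcont.mul hucont) volume
  have hu2_int : Integrable (fun y => u y ^ 2) volume :=
    cont_integrable (hucont.pow 2) volume
  have hφ2_int : Integrable (fun y => φ y ^ 2) volume :=
    cont_integrable (hφcont.pow 2) volume
  set Iφu : ℝ := ∫ y, φ y * u y with hIφu
  set Iu : ℝ := ∫ y, u y ^ 2 with hIu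
  set Iφ : ℝ := ∫ y, φ y ^ 2 with hIφ
  have hIu0 : 0 ≤ Iu := integral_nonneg fun y => sq_nonneg _
  have hIφ0 : 0 ≤ Iφ := integral_nonneg fun y => sq_nonneg _
  -- LHS equals ∫ φ u
  have hLHS : (∫ x, (coupling ξ Fb m₁ x - coupling ξ Fb m₂ x) ∂m₁)
      - ∫ x, (coupling ξ Fb m₁ x - coupling ξ Fb m₂ x) ∂m₂ = Iφu := by
    have h1 : ∀ (m : Measure (Torus d)), IsProbabilityMeasure m →
        ∫ x, (coupling ξ Fb m₁ x - coupling ξ Fb m₂ x) ∂m = ∫ x, G x ∂m := by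
      intro m hm
      apply integral_congr_ae
      filter_upwards with x
      exact hcoup x
    rw [h1 m₁ hm₁, h1 m₂ hm₂, hGm m₁ hm₁, hGm m₂ hm₂, ← integral_sub]
    · apply integral_congr_ae
      filter_upwards with y
      simp only [hudef]
      ring
    · exact cont_integrable (hφcont.mul hconv₁) volume
    · exact cont_integrable (hφcont.mul hconv₂) volume
  -- lower bound on ∫ φ u
  have hL1 : c * Iu ≤ Iφu := by
    rw [hIφu, hIu, ← integral_const_mul]
    exact integral_mono (hu2_int.const_mul c) hφu_int fun y => (hpt y).1
  have hL2 : Iφ ≤ (1 / c) ^ 2 * Iu := by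
    rw [hIφ, hIu, ← integral_const_mul]
    exact integral_mono hφ2_int (hu2_int.const_mul _) fun y => (hpt y).2
  -- pointwise Cauchy-Schwarz bound on G
  have hCS : ∀ x, G x ^ 2 ≤ Iφ * K := by
    intro x
    have h1 : (∫ y, φ y * ξ (x - y)) ^ 2 ≤ Iφ * ∫ y, ξ (x - y) ^ 2 := by
      apply integral_cauchy_schwarz volume φ (fun y => ξ (x - y)) hφ2_int
      · exact cont_integrable ((hξcont.comp (continuous_const.sub continuous_id)).pow 2) volume
      · exact cont_integrable (hφcont.mul
          (hξcont.comp (continuous_const.sub continuous_id))) volume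
    have h2 : ∫ y, ξ (x - y) ^ 2 = K := by
      rw [hKdef]
      exact integral_sub_left_eq_self (fun y => ξ y ^ 2) volume x
    rw [h2] at h1
    exact h1
  -- integrate the pointwise bound
  have hG2 : ∫ x, G x ^ 2 ≤ Iφ * K := by
    have h1 : ∫ x, G x ^ 2 ≤ ∫ _x : Torus d, Iφ * K :=
      integral_mono (cont_integrable (hGcont.pow 2) volume) (integrable_const _) hCS
    rwa [integral_const, probReal_univ, one_smul] at h1
  have hG20 : 0 ≤ ∫ x, G x ^ 2 := integral_nonneg fun x => sq_nonneg _
  -- conclude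
  have hRHS : ∫ x, (coupling ξ Fb m₁ x - coupling ξ Fb m₂ x) ^ 2 = ∫ x, G x ^ 2 := by
    apply integral_congr_ae
    filter_upwards with x
    rw [hcoup x]
  rw [hLHS, hRHS, ge_iff_le, div_mul_eq_mul_div, div_le_iff₀ hM]
  -- c^3 * ∫ G² ≤ Iφu * M
  have hchain : ∫ x, G x ^ 2 ≤ M * Iφ := le_trans hG2 (by nlinarith)
  have hIuc : c ^ 2 * Iφ ≤ Iu := by
    have h := mul_le_mul_of_nonneg_left hL2 (sq_nonneg c)
    have hcc : c ^ 2 * ((1 / c) ^ 2 * Iu) = Iu := by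
      field_simp
    nlinarith [h, hcc]
  nlinarith [mul_le_mul_of_nonneg_left hchain (le_of_lt (by positivity : (0:ℝ) < c ^ 3)),
    mul_le_mul_of_nonneg_left hIuc (le_of_lt (by positivity : (0:ℝ) < c * M)),
    mul_le_mul_of_nonneg_left hL1 (le_of_lt hM), hIφ0, hIu0]
end
end
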